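/- Let ν be a Borel probability measure on ℝ, let a < b and c > 0 be such that ν(A) ≥ c·λ(A) for every Borel set A ⊆ [a,b], where λ is Lebesgue measure. Let r ≥ 1 be an integer and let ε satisfy 0 < 3ε < b − a. Then the r-fold convolution ν^{⋆r} (i.e., the law of V₁ + ⋯ + V_r where V₁, …, V_r are i.i.d. with law ν, equivalently the pushforward of the r-fold product measure ν^{⊗r} under the sum map) satisfies ν^{⋆r}(A) ≥ c^r·ε^{r−1}·λ(A) for every Borel set A ⊆ [r(a+ε) − ε, r(b−ε) + ε]. -/

import Mathlib

open MeasureTheory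

/-- The `r`-fold convolution of a Borel measure `ν` on `ℝ`: the pushforward of the
`r`-fold product measure under the sum map. -/
noncomputable def convPow (ν : Measure ℝ) (r : ℕ) : Measure ℝ :=
  (Measure.pi (fun _ : Fin r => ν)).map (fun x => ∑ i, x i)

lemma measurable_sum_fin (r : ℕ) : Measurable (fun x : Fin r → ℝ => ∑ i, x i) :=
  Finset.measurable_sum _ fun i _ => measurable_pi_apply i

instance convPow_prob (ν : Measure ℝ) [IsProbabilityMeasure ν] (r : ℕ) :
    IsProbabilityMeasure (convPow ν r) :=
  Measure.isProbabilityMeasure_map (measurable_sum_fin r).aemeasurable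

lemma convPow_one (ν : Measure ℝ) [IsProbabilityMeasure ν] : convPow ν 1 = ν := by
  have h := (measurePreserving_funUnique ν (Fin 1)).map_eq
  unfold convPow
  have he : (fun x : Fin 1 → ℝ => ∑ i, x i)
      = (MeasurableEquiv.funUnique (Fin 1) ℝ : (Fin 1 → ℝ) → ℝ) := by
    funext x
    simp [Fin.sum_univ_one, MeasurableEquiv.funUnique]
  rw [he]
  exact h

lemma convPow_succ (ν : Measure ℝ) [IsProbabilityMeasure ν] (r : ℕ) :
    convPow ν (r + 1)
      = (ν.prod (convPow ν r)).map (fun p : ℝ × ℝ => p.1 + p.2) := by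
  have h := (measurePreserving_piFinSuccAbove (fun _ : Fin (r + 1) => ν) 0).map_eq
  unfold convPow
  have hsum : (fun x : Fin (r + 1) → ℝ => ∑ i, x i)
      = (fun p : ℝ × (Fin r → ℝ) => p.1 + ∑ i, p.2 i)
        ∘ (MeasurableEquiv.piFinSuccAbove (fun _ : Fin (r + 1) => ℝ) 0) := by
    funext x
    simp [MeasurableEquiv.piFinSuccAbove, Fin.sum_univ_succAbove _ 0, Fin.tail]
  rw [hsum, ← Measure.map_map (by fun_prop)
      (MeasurableEquiv.piFinSuccAbove (fun _ : Fin (r + 1) => ℝ) 0).measurable, h]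
  have hg : (fun p : ℝ × (Fin r → ℝ) => p.1 + ∑ i, p.2 i)
      = (fun p : ℝ × ℝ => p.1 + p.2) ∘ Prod.map id (fun x : Fin r → ℝ => ∑ i, x i) := by
    funext p; rfl
  rw [hg, ← Measure.map_map measurable_add (measurable_id.prodMap (measurable_sum_fin r)),
    ← Measure.map_prod_map _ _ measurable_id (measurable_sum_fin r), Measure.map_id]

lemma conv_apply (μ σ : Measure ℝ) [SFinite σ] {A : Set ℝ} (hA : MeasurableSet A) :
    ((μ.prod σ).map (fun p : ℝ × ℝ => p.1 + p.2)) A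
      = ∫⁻ x, σ ((fun y => x + y) ⁻¹' A) ∂μ := by
  rw [Measure.map_apply measurable_add hA, Measure.prod_apply (measurable_add hA)]
  rfl

lemma length_lemma (a b ε A' B' s : ℝ) (hε : 0 < ε) (h3 : 3 * ε ≤ b - a)
    (hBA : A' + ε ≤ B') (hs : s ∈ Set.Icc (A' + a + ε) (B' + b - ε)) :
    ENNReal.ofReal ε ≤ volume (Set.Icc a b ∩ Set.Icc (s - B') (s - A')) := by
  rw [Set.Icc_inter_Icc, Real.volume_Icc]
  apply ENNReal.ofReal_le_ofReal
  obtain ⟨h1, h2⟩ := hs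
  rcases le_total (s - B') a with h | h <;> rcases le_total b (s - A') with h' | h'
  · rw [sup_eq_left.2 h, inf_eq_left.2 h']; linarith
  · rw [sup_eq_left.2 h, inf_eq_right.2 h']; linarith
  · rw [sup_eq_right.2 h, inf_eq_left.2 h']; linarith
  · rw [sup_eq_right.2 h, inf_eq_right.2 h']; linarith

lemma step_lemma (ν κ : Measure ℝ) [IsProbabilityMeasure ν] [IsProbabilityMeasure κ]
    (a b c ε A' B' C : ℝ) (hε : 0 < ε) (h3 : 3 * ε ≤ b - a) (hBA : A' + ε ≤ B')
    (hν : ENNReal.ofReal c • volume.restrict (Set.Icc a b) ≤ ν)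
    (hκ : ENNReal.ofReal C • volume.restrict (Set.Icc A' B') ≤ κ) :
    (ENNReal.ofReal c * ENNReal.ofReal C * ENNReal.ofReal ε)
        • volume.restrict (Set.Icc (A' + a + ε) (B' + b - ε))
      ≤ (ν.prod κ).map (fun p : ℝ × ℝ => p.1 + p.2) := by
  set J := Set.Icc (A' + a + ε) (B' + b - ε) with hJ
  rw [Measure.le_iff]
  intro s hs
  rw [Measure.smul_apply, smul_eq_mul, Measure.restrict_apply hs]
  set A := s ∩ J with hA
  have hAm : MeasurableSet A := hs.inter measurableSet_Icc
  have hAsub : A ⊆ J := Set.inter_subset_right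
  have hmono : ((ν.prod κ).map (fun p : ℝ × ℝ => p.1 + p.2)) A
      ≤ ((ν.prod κ).map (fun p : ℝ × ℝ => p.1 + p.2)) s := by
    apply measure_mono Set.inter_subset_left
  refine le_trans ?_ hmono
  rw [conv_apply ν κ hAm]
  -- pointwise bound on the inner measure
  have hpt : ∀ x : ℝ, ENNReal.ofReal C *
      volume (((fun y => x + y) ⁻¹' A) ∩ Set.Icc A' B') ≤ κ ((fun y => x + y) ⁻¹' A) := by
    intro x
    have hm : MeasurableSet ((fun y : ℝ => x + y) ⁻¹' A) := (measurable_const_add x) hAm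
    have := Measure.le_iff.1 hκ _ hm
    rwa [Measure.smul_apply, smul_eq_mul, Measure.restrict_apply hm] at this
  calc
    ENNReal.ofReal c * ENNReal.ofReal C * ENNReal.ofReal ε * volume A
      ≤ ENNReal.ofReal c * (ENNReal.ofReal C *
          ∫⁻ x in Set.Icc a b, volume (((fun y => x + y) ⁻¹' A) ∩ Set.Icc A' B') ∂volume) := by
        -- compute the inner integral from below
        have hT : MeasurableSet {p : ℝ × ℝ | p.2 ∈ A ∧ p.2 - p.1 ∈ Set.Icc A' B'} :=
          (measurable_snd hAm).inter ((measurable_snd.sub measurable_fst) measurableSet_Icc)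
        set T : Set (ℝ × ℝ) := {p : ℝ × ℝ | p.2 ∈ A ∧ p.2 - p.1 ∈ Set.Icc A' B'} with hTdef
        have key : ENNReal.ofReal ε * volume A
            ≤ ∫⁻ x in Set.Icc a b, volume (((fun y => x + y) ⁻¹' A) ∩ Set.Icc A' B') ∂volume := by
          have htrans : ∀ x : ℝ, volume (((fun y => x + y) ⁻¹' A) ∩ Set.Icc A' B')
              = volume (Prod.mk x ⁻¹' T) := by
            intro x
            have h1 : ((fun y => x + y) ⁻¹' A) ∩ Set.Icc A' B'
                = (fun y => x + y) ⁻¹' (Prod.mk x ⁻¹' T) := by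
              ext y
              simp only [Set.mem_inter_iff, Set.mem_preimage, Set.mem_Icc, hTdef,
                Set.mem_setOf_eq]
              constructor
              · rintro ⟨h1, h2, h3⟩
                exact ⟨h1, by linarith, by linarith⟩
              · rintro ⟨h1, h2, h3⟩
                exact ⟨h1, by linarith, by linarith⟩
            rw [h1, measure_preimage_add]
          calc ENNReal.ofReal ε * volume A
              = ∫⁻ s in A, ENNReal.ofReal ε ∂volume := by
                rw [setLIntegral_const, mul_comm]
            _ ≤ ∫⁻ s in A, (volume.restrict (Set.Icc a b)) (Set.Icc (s - B') (s - A'))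
                  ∂volume := by
                refine setLIntegral_mono' hAm fun s hsA => ?_
                rw [Measure.restrict_apply measurableSet_Icc, Set.inter_comm]
                exact length_lemma a b ε A' B' s hε h3 hBA (hAsub hsA)
            _ = ∫⁻ s, A.indicator
                  (fun s => (volume.restrict (Set.Icc a b)) (Set.Icc (s - B') (s - A')))
                  s ∂volume := (lintegral_indicator hAm _).symm
            _ = ∫⁻ s, (volume.restrict (Set.Icc a b)) ((fun x => (x, s)) ⁻¹' T) ∂volume := by
                congr 1
                funext s
                by_cases hsA : s ∈ A
                · have h2 : ((fun x => (x, s)) ⁻¹' T) = Set.Icc (s - B') (s - A') := by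
                    ext x
                    simp only [Set.mem_preimage, hTdef, Set.mem_setOf_eq, Set.mem_Icc, hsA,
                      true_and]
                    constructor
                    · rintro ⟨h1', h2'⟩; exact ⟨by linarith, by linarith⟩
                    · rintro ⟨h1', h2'⟩; exact ⟨by linarith, by linarith⟩
                  rw [Set.indicator_of_mem hsA, h2]
                · have h2 : ((fun x => (x, s)) ⁻¹' T) = ∅ := by
                    ext x
                    simp [hTdef, hsA]
                  rw [Set.indicator_of_notMem hsA, h2, measure_empty]
            _ = ((volume.restrict (Set.Icc a b)).prod volume) T :=
                (Measure.prod_apply_symm hT).symm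
            _ = ∫⁻ x in Set.Icc a b, volume (Prod.mk x ⁻¹' T) ∂volume :=
                Measure.prod_apply hT
            _ = _ := by
                refine lintegral_congr fun x => ?_
                rw [htrans x]
        calc ENNReal.ofReal c * ENNReal.ofReal C * ENNReal.ofReal ε * volume A
            = ENNReal.ofReal c * (ENNReal.ofReal C * (ENNReal.ofReal ε * volume A)) := by ring
          _ ≤ _ := by gcongr
    _ = ENNReal.ofReal c *
          ∫⁻ x in Set.Icc a b, ENNReal.ofReal C *
            volume (((fun y => x + y) ⁻¹' A) ∩ Set.Icc A' B') ∂volume := by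
        rw [lintegral_const_mul' _ _ ENNReal.ofReal_ne_top]
    _ = ∫⁻ x, ENNReal.ofReal C *
          volume (((fun y => x + y) ⁻¹' A) ∩ Set.Icc A' B')
          ∂(ENNReal.ofReal c • volume.restrict (Set.Icc a b)) := by
        rw [lintegral_smul_measure, smul_eq_mul]
    _ ≤ ∫⁻ x, ENNReal.ofReal C *
          volume (((fun y => x + y) ⁻¹' A) ∩ Set.Icc A' B') ∂ν := lintegral_mono' hν le_rfl
    _ ≤ ∫⁻ x, κ ((fun y => x + y) ⁻¹' A) ∂ν := lintegral_mono hpt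

theorem stmt_2 (ν : Measure ℝ) [IsProbabilityMeasure ν]
    (a b c : ℝ) (hab : a < b) (hc : 0 < c)
    (hν : ∀ A : Set ℝ, A ⊆ Set.Icc a b → MeasurableSet A →
      ENNReal.ofReal c * volume A ≤ ν A)
    (r : ℕ) (hr : 1 ≤ r) (ε : ℝ) (hε0 : 0 < ε) (hε : 3 * ε < b - a) :
    ∀ A : Set ℝ, A ⊆ Set.Icc ((r : ℝ) * (a + ε) - ε) ((r : ℝ) * (b - ε) + ε) →
      MeasurableSet A →
      ENNReal.ofReal (c ^ r * ε ^ (r - 1)) * volume A ≤ convPow ν r A := by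
  have hν' : ENNReal.ofReal c • volume.restrict (Set.Icc a b) ≤ ν := by
    rw [Measure.le_iff]
    intro s hs
    rw [Measure.smul_apply, smul_eq_mul, Measure.restrict_apply hs]
    calc ENNReal.ofReal c * volume (s ∩ Set.Icc a b)
        ≤ ν (s ∩ Set.Icc a b) :=
          hν _ Set.inter_subset_right (hs.inter measurableSet_Icc)
      _ ≤ ν s := measure_mono Set.inter_subset_left
  have key : ENNReal.ofReal (c ^ r * ε ^ (r - 1)) •
      volume.restrict (Set.Icc ((r : ℝ) * (a + ε) - ε) ((r : ℝ) * (b - ε) + ε))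
      ≤ convPow ν r := by
    induction r, hr using Nat.le_induction with
    | base =>
      rw [convPow_one]
      have h1 : ((1 : ℕ) : ℝ) * (a + ε) - ε = a := by push_cast; ring
      have h2 : ((1 : ℕ) : ℝ) * (b - ε) + ε = b := by push_cast; ring
      have h3 : c ^ 1 * ε ^ (1 - 1) = c := by norm_num
      rw [h1, h2, h3]
      exact hν'
    | succ n hn1 ih =>
      have ih' := ih
      rw [convPow_succ]
      have hBA : ((n : ℝ) * (a + ε) - ε) + ε ≤ (n : ℝ) * (b - ε) + ε := by
        have hn1' : (1 : ℝ) ≤ (n : ℝ) := by exact_mod_cast hn1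
        nlinarith
      have hstep := step_lemma ν (convPow ν n) a b c ε
        ((n : ℝ) * (a + ε) - ε) ((n : ℝ) * (b - ε) + ε) (c ^ n * ε ^ (n - 1))
        hε0 hε.le hBA hν' ih'
      have hI : Set.Icc (((n : ℝ) * (a + ε) - ε) + a + ε) (((n : ℝ) * (b - ε) + ε) + b - ε)
          = Set.Icc (((n + 1 : ℕ) : ℝ) * (a + ε) - ε) (((n + 1 : ℕ) : ℝ) * (b - ε) + ε) := by
        congr 1 <;> push_cast <;> ring
      have hconst : ENNReal.ofReal c * ENNReal.ofReal (c ^ n * ε ^ (n - 1)) *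
          ENNReal.ofReal ε = ENNReal.ofReal (c ^ (n + 1) * ε ^ (n + 1 - 1)) := by
        rw [← ENNReal.ofReal_mul hc.le, ← ENNReal.ofReal_mul (by positivity)]
        simp only [Nat.add_sub_cancel]
        have hee : ε ^ (n - 1) * ε = ε ^ n := by
          rw [← pow_succ]
          congr 1
          omega
        rw [show c * (c ^ n * ε ^ (n - 1)) * ε = (c * c ^ n) * (ε ^ (n - 1) * ε) by ring,
          hee, ← pow_succ']
      rw [hI, hconst] at hstep
      exact hstep
  intro A hA hAm
  have := Measure.le_iff.1 key A hAm
  rwa [Measure.smul_apply, smul_eq_mul, Measure.restrict_apply hAm,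
    Set.inter_eq_self_of_subset_left hA] at this
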